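/- Let t1, t2, t3 ∈ ℂ be pairwise distinct. For each cyclic permutation (i, j, k) of (1, 2, 3) let M_i be the 2×2 matrix [[−t_i, 1], [t_j t_k − t_i(t_j + t_k), t_i]]. Then the vector (v1, v2, v3) = (t1(t2+t3) − t2t3, t2(t1+t3) − t1t3, t3(t1+t2) − t1t2) is the unique vector in ℂ³ satisfying Σ_{i=1}^{3} (v_i / (2 (t_i − t_j)(t_i − t_k))) · M_i = [[0, −1], [0, 0]], where for each i the indices j, k are the two elements of {1,2,3} \ {i}. -/

import Mathlib

open Matrix

set_option maxHeartbeats 1000000 in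
/-- The Darboux–Halphen vector field is the unique vector field contracting the
Gauss–Manin connection matrix of the family y² = 4(x−t₁)(x−t₂)(x−t₃) to
[[0, −1], [0, 0]]. -/
theorem gauss_manin_in_disguise_unique
    (t1 t2 t3 : ℂ) (h12 : t1 ≠ t2) (h13 : t1 ≠ t3) (h23 : t2 ≠ t3) :
    ∀ v : Fin 3 → ℂ,
      ((v 0 / (2 * (t1 - t2) * (t1 - t3))) •
          (!![-t1, 1; t2 * t3 - t1 * (t2 + t3), t1] : Matrix (Fin 2) (Fin 2) ℂ) +
        (v 1 / (2 * (t2 - t1) * (t2 - t3))) •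
          (!![-t2, 1; t1 * t3 - t2 * (t1 + t3), t2] : Matrix (Fin 2) (Fin 2) ℂ) +
        (v 2 / (2 * (t3 - t1) * (t3 - t2))) •
          (!![-t3, 1; t1 * t2 - t3 * (t1 + t2), t3] : Matrix (Fin 2) (Fin 2) ℂ)
        = !![0, -1; 0, 0]) ↔
      v = ![t1 * (t2 + t3) - t2 * t3, t2 * (t1 + t3) - t1 * t3, t3 * (t1 + t2) - t1 * t2] := by
  intro v
  have hd1 : (2 * (t1 - t2) * (t1 - t3)) ≠ 0 := by simp [sub_eq_zero, h12, h13]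
  have hd2 : (2 * (t2 - t1) * (t2 - t3)) ≠ 0 := by simp [sub_eq_zero, h12.symm, h23]
  have hd3 : (2 * (t3 - t1) * (t3 - t2)) ≠ 0 := by simp [sub_eq_zero, h13.symm, h23.symm]
  have hP : (2 * (t1 - t2) * (t1 - t3)) * (2 * (t2 - t1) * (t2 - t3)) *
      (2 * (t3 - t1) * (t3 - t2)) ≠ 0 := mul_ne_zero (mul_ne_zero hd1 hd2) hd3
  constructor
  · intro h
    have h01 := congrFun (congrFun h 0) 1
    have h11 := congrFun (congrFun h 1) 1
    have h10 := congrFun (congrFun h 1) 0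
    simp [Matrix.add_apply] at h01 h11 h10
    field_simp at h01 h11 h10
    funext i
    fin_cases i
    · show v 0 = t1 * (t2 + t3) - t2 * t3
      have key : (2 * (t1 - t2) * (t1 - t3)) * (2 * (t2 - t1) * (t2 - t3)) *
          (2 * (t3 - t1) * (t3 - t2)) * (v 0 - (t1 * (t2 + t3) - t2 * t3)) = 0 := by
        linear_combination 4 * (h10 - (t1 * (t2 + t3) - t2 * t3) * h01 + 2 * t1 * h11)
      have := (mul_eq_zero.mp key).resolve_left hP
      exact sub_eq_zero.mp this
    · show v 1 = t2 * (t1 + t3) - t1 * t3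
      have key : (2 * (t1 - t2) * (t1 - t3)) * (2 * (t2 - t1) * (t2 - t3)) *
          (2 * (t3 - t1) * (t3 - t2)) * (v 1 - (t2 * (t1 + t3) - t1 * t3)) = 0 := by
        linear_combination 4 * (h10 - (t2 * (t1 + t3) - t1 * t3) * h01 + 2 * t2 * h11)
      have := (mul_eq_zero.mp key).resolve_left hP
      exact sub_eq_zero.mp this
    · show v 2 = t3 * (t1 + t2) - t1 * t2
      have key : (2 * (t1 - t2) * (t1 - t3)) * (2 * (t2 - t1) * (t2 - t3)) *
          (2 * (t3 - t1) * (t3 - t2)) * (v 2 - (t3 * (t1 + t2) - t1 * t2)) = 0 := by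
        linear_combination 4 * (h10 - (t3 * (t1 + t2) - t1 * t2) * h01 + 2 * t3 * h11)
      have := (mul_eq_zero.mp key).resolve_left hP
      exact sub_eq_zero.mp this
  · intro hv
    subst hv
    simp only [Matrix.cons_val_zero, Matrix.cons_val_one, Matrix.head_cons, Matrix.cons_val_two,
      Matrix.tail_cons]
    ext i j
    fin_cases i <;> fin_cases j <;>
      simp only [Matrix.add_apply, Matrix.smul_apply, Matrix.cons_val', Matrix.cons_val_zero,
        Matrix.cons_val_one, Matrix.head_cons, Matrix.empty_val', Matrix.cons_val_fin_one,
        Matrix.of_apply, smul_eq_mul, Fin.isValue, Matrix.head_fin_const, Fin.zero_eta, Fin.mk_one] <;>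
      field_simp <;> ring
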